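/- For |p| < 1 and |q| < 1, the limit lim_{x → 1} (1 − x)·Γ_{p,q}(x) equals 1/((p;p)_∞ (q;q)_∞), where (a;b)_∞ = ∏_{k ≥ 0}(1 − a b^k). -/

import Mathlib

open Filter Topology

/-- The elliptic Gamma function
`Γ_{p,q}(z) = ∏_{i,j ≥ 0} (1 - p^{i+1} q^{j+1}/z)/(1 - p^i q^j z)`. -/
noncomputable def ellGamma (p q z : ℂ) : ℂ :=
  ∏' ij : ℕ × ℕ,
    ((1 - p ^ (ij.1 + 1) * q ^ (ij.2 + 1) / z) / (1 - p ^ ij.1 * q ^ ij.2 * z))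

/-- The infinite q-Pochhammer symbol `(a;b)_∞ = ∏_{k ≥ 0} (1 - a b^k)`. -/
noncomputable def qPoch (a b : ℂ) : ℂ := ∏' k : ℕ, (1 - a * b ^ k)

private lemma norm_log_le_aux {z : ℂ} {m : ℝ} (hm : m < 1) (hz : ‖z‖ ≤ m) :
    ‖Complex.log (1 + z)‖ ≤ (m * (1 - m)⁻¹ / 2 + 1) * ‖z‖ := by
  have h0 : (0:ℝ) ≤ ‖z‖ := norm_nonneg _
  have hz1 : ‖z‖ < 1 := lt_of_le_of_lt hz hm
  have h := Complex.norm_log_one_add_le hz1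
  have h1 : (1 - ‖z‖)⁻¹ ≤ (1 - m)⁻¹ := by
    apply inv_anti₀ <;> linarith
  have h2 : ‖z‖ ^ 2 * (1 - ‖z‖)⁻¹ ≤ (m * ‖z‖) * (1 - m)⁻¹ := by
    apply mul_le_mul _ h1 (inv_nonneg.mpr (by linarith)) (mul_nonneg (h0.trans hz) h0)
    nlinarith
  nlinarith

private lemma hasProd_inv₀ {ι : Type*} {f : ι → ℂ} {a : ℂ} (h : HasProd f a) (ha : a ≠ 0) :
    HasProd (fun i => (f i)⁻¹) a⁻¹ := by
  have ht : Filter.Tendsto (fun s : Finset ι => (∏ b ∈ s, f b)⁻¹) Filter.atTop (𝓝 a⁻¹) :=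
    Filter.Tendsto.inv₀ h ha
  have : (fun s : Finset ι => (∏ b ∈ s, f b)⁻¹)
      = fun s : Finset ι => ∏ b ∈ s, (f b)⁻¹ := by
    funext s; rw [← Finset.prod_inv_distrib]
  rw [this] at ht
  exact ht

/-- Main workhorse: multipliability, continuity and nonvanishing of `∏ (1 + f i x)`. -/
private lemma aux_main {ι : Type*} {f : ι → ℂ → ℂ} {s : Set ℂ} {u : ι → ℝ} {m : ℝ}
    (hu : Summable u) (hm0 : 0 ≤ m) (hm : m < 1)
    (hfu : ∀ i, ∀ x ∈ s, ‖f i x‖ ≤ u i) (hum : ∀ i, u i ≤ m)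
    (hcont : ∀ i, ContinuousOn (f i) s) :
    (∀ x ∈ s, Multipliable (fun i => 1 + f i x)) ∧
      ContinuousOn (fun x => ∏' i, (1 + f i x)) s ∧
      ∀ x ∈ s, (∏' i, (1 + f i x)) ≠ 0 := by
  set K : ℝ := m * (1 - m)⁻¹ / 2 + 1 with hK
  have hKpos : 0 < K := by
    have : 0 ≤ m * (1 - m)⁻¹ / 2 := by
      have : 0 ≤ (1 - m)⁻¹ := inv_nonneg.mpr (by linarith)
      positivity
    simp only [hK]; linarith
  have hb : ∀ i, ∀ x ∈ s, ‖f i x‖ ≤ m := fun i x hx => (hfu i x hx).trans (hum i)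
  have hlog : ∀ i, ∀ x ∈ s, ‖Complex.log (1 + f i x)‖ ≤ K * u i := by
    intro i x hx
    refine (norm_log_le_aux hm (hb i x hx)).trans ?_
    exact mul_le_mul_of_nonneg_left (hfu i x hx) hKpos.le
  have hne : ∀ x ∈ s, ∀ i, 1 + f i x ≠ 0 := by
    intro x hx i h
    have h1 : f i x = -1 := by linear_combination h
    have := hb i x hx
    rw [h1] at this
    simp at this
    linarith
  have hslit : ∀ x ∈ s, ∀ i, 1 + f i x ∈ Complex.slitPlane := fun x hx i =>
    Complex.mem_slitPlane_of_norm_lt_one (lt_of_le_of_lt (hb i x hx) hm)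
  have hsum : ∀ x ∈ s, Summable fun i => Complex.log (1 + f i x) := by
    intro x hx
    exact Summable.of_norm (Summable.of_nonneg_of_le (fun _ => norm_nonneg _)
      (fun i => hlog i x hx) (hu.mul_left K))
  have hmul : ∀ x ∈ s, Multipliable fun i => 1 + f i x := by
    intro x hx
    exact Complex.multipliable_of_summable_log (hsum x hx)
  have hprodeq : ∀ x ∈ s, (∏' i, (1 + f i x)) =
      Complex.exp (∑' i, Complex.log (1 + f i x)) := by
    intro x hx
    exact (Complex.cexp_tsum_eq_tprod (hne x hx) (hsum x hx)).symm
  refine ⟨hmul, ?_, fun x hx => by rw [hprodeq x hx]; exact Complex.exp_ne_zero _⟩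
  have hcs : ContinuousOn (fun x => ∑' i, Complex.log (1 + f i x)) s := by
    apply TendstoUniformlyOn.continuousOn (tendstoUniformlyOn_tsum (hu.mul_left K)
      (fun i x hx => hlog i x hx))
    refine Filter.Eventually.frequently ?_
    filter_upwards with t
    apply continuousOn_finset_sum
    intro i _
    exact ContinuousOn.clog (continuousOn_const.add (hcont i)) (fun x hx => hslit x hx i)
  exact ContinuousOn.congr (Complex.continuous_exp.comp_continuousOn hcs)
    (fun x hx => hprodeq x hx)

/-- `lim_{x → 1} (1 − x) Γ_{p,q}(x) = 1/((p;p)_∞ (q;q)_∞)`. -/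
theorem ellGamma_residue_at_one (p q : ℂ) (hp : ‖p‖ < 1) (hq : ‖q‖ < 1) :
    Tendsto (fun x : ℂ => (1 - x) * ellGamma p q x) (𝓝[≠] 1)
      (𝓝 (1 / (qPoch p p * qPoch q q))) := by
  classical
  set m0 : ℝ := max ‖p‖ ‖q‖ with hm0def
  have hm00 : 0 ≤ m0 := le_max_iff.mpr (Or.inl (norm_nonneg p))
  have hm01 : m0 < 1 := max_lt hp hq
  have hple : ‖p‖ ≤ m0 := le_max_left _ _
  have hqle : ‖q‖ ≤ m0 := le_max_right _ _
  set r : ℝ := (1 - m0) / 2 with hrdef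
  have hr : 0 < r := by simp only [hrdef]; linarith
  have hrlt : r < 1 := by simp only [hrdef]; linarith
  set s : Set ℂ := Metric.ball (1:ℂ) r with hsdef
  have h1s : (1:ℂ) ∈ s := Metric.mem_ball_self hr
  have hxub : ∀ x ∈ s, ‖x‖ ≤ 1 + r := by
    intro x hx
    have h1 : ‖x - 1‖ < r := by
      simpa [hsdef, Metric.mem_ball, dist_eq_norm] using hx
    have hxeq : x = (x - 1) + 1 := by ring
    calc ‖x‖ = ‖(x - 1) + 1‖ := by rw [← hxeq]
    _ ≤ ‖x - 1‖ + ‖(1:ℂ)‖ := norm_add_le _ _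
    _ ≤ 1 + r := by simp only [norm_one]; linarith
  have hxlb : ∀ x ∈ s, 1 - r ≤ ‖x‖ := by
    intro x hx
    have h1 : ‖x - 1‖ < r := by
      simpa [hsdef, Metric.mem_ball, dist_eq_norm] using hx
    have h2 : ‖(1:ℂ)‖ - ‖1 - x‖ ≤ ‖(1:ℂ) - (1 - x)‖ := norm_sub_norm_le (1:ℂ) (1 - x)
    have h3 : ‖1 - x‖ < r := by rwa [norm_sub_rev] at h1
    simp only [norm_one, sub_sub_cancel] at h2
    linarith
  have hxne : ∀ x ∈ s, x ≠ 0 := by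
    intro x hx h
    have := hxlb x hx
    rw [h] at this
    simp at this
    linarith
  have hinvb : ∀ x ∈ s, ‖x⁻¹‖ ≤ (1 - r)⁻¹ := by
    intro x hx
    rw [norm_inv]
    exact inv_anti₀ (by linarith) (hxlb x hx)
  have hgeo : Summable (fun ij : ℕ × ℕ => ‖p‖ ^ ij.1 * ‖q‖ ^ ij.2) :=
    Summable.mul_of_nonneg (summable_geometric_of_lt_one (norm_nonneg p) hp)
      (summable_geometric_of_lt_one (norm_nonneg q) hq)
      (fun i => pow_nonneg (norm_nonneg p) i) (fun j => pow_nonneg (norm_nonneg q) j)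
  have hkey : ∀ ij : ℕ × ℕ, ij ≠ 0 → ‖p‖ ^ ij.1 * ‖q‖ ^ ij.2 ≤ m0 := by
    rintro ⟨i, j⟩ hij
    rcases Nat.eq_zero_or_pos i with hi | hi
    · subst hi
      have hj : j ≠ 0 := fun h => hij (by simp [Prod.mk_eq_zero, h])
      simp only [pow_zero, one_mul]
      calc ‖q‖ ^ j ≤ ‖q‖ ^ 1 :=
            pow_le_pow_of_le_one (norm_nonneg q) hq.le (Nat.one_le_iff_ne_zero.mpr hj)
      _ ≤ m0 := by simpa using hqle
    · calc ‖p‖ ^ i * ‖q‖ ^ j ≤ ‖p‖ ^ 1 * 1 :=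
          mul_le_mul (pow_le_pow_of_le_one (norm_nonneg p) hp.le hi)
            (pow_le_one₀ (norm_nonneg q) hq.le) (pow_nonneg (norm_nonneg q) j)
            (by positivity)
      _ ≤ m0 := by simpa using hple
  -- the two families of factors
  set fN : ℕ × ℕ → ℂ → ℂ := fun ij x => -(p ^ (ij.1 + 1) * q ^ (ij.2 + 1) * x⁻¹) with hfN
  set fD : ℕ × ℕ → ℂ → ℂ :=
    fun ij x => if ij = 0 then 0 else -(p ^ ij.1 * q ^ ij.2 * x) with hfD
  set uN : ℕ × ℕ → ℝ :=
    fun ij => ‖p‖ ^ ij.1 * ‖q‖ ^ ij.2 * (‖p‖ * ‖q‖ * (1 - r)⁻¹) with huN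
  set uD : ℕ × ℕ → ℝ :=
    fun ij => (if ij = 0 then 0 else ‖p‖ ^ ij.1 * ‖q‖ ^ ij.2) * (1 + r) with huD
  have h1r : 0 < 1 - r := by linarith
  have hpqm : ‖p‖ * ‖q‖ ≤ m0 := by
    calc ‖p‖ * ‖q‖ ≤ m0 * 1 := mul_le_mul hple hq.le (norm_nonneg q) hm00
    _ = m0 := mul_one m0
  set mN : ℝ := m0 * (1 - r)⁻¹ with hmNdef
  have hmN0 : 0 ≤ mN := mul_nonneg hm00 (inv_nonneg.mpr h1r.le)
  have hmN1 : mN < 1 := by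
    rw [hmNdef, ← div_eq_mul_inv, div_lt_one h1r]
    simp only [hrdef]; linarith
  set mD : ℝ := m0 * (1 + r) with hmDdef
  have hmD0 : 0 ≤ mD := mul_nonneg hm00 (by linarith)
  have hmD1 : mD < 1 := by
    rw [hmDdef]
    nlinarith [mul_pos (sub_pos.mpr hm01) (show (0:ℝ) < 2 - m0 by linarith)]
  have hUN : Summable uN := hgeo.mul_right _
  have hUD : Summable uD := by
    apply Summable.of_nonneg_of_le _ _ (hgeo.mul_right (1 + r))
    · intro ij
      rcases eq_or_ne ij 0 with h | h <;> simp [huD, h] <;> positivity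
    · intro ij
      apply mul_le_mul_of_nonneg_right _ (by linarith)
      rcases eq_or_ne ij 0 with h | h <;> simp [h] <;> positivity
  have hfNu : ∀ ij : ℕ × ℕ, ∀ x ∈ s, ‖fN ij x‖ ≤ uN ij := by
    intro ij x hx
    have heq : ‖fN ij x‖ = ‖p‖ ^ ij.1 * ‖q‖ ^ ij.2 * (‖p‖ * ‖q‖) * ‖x⁻¹‖ := by
      simp only [hfN, norm_neg, norm_mul, norm_pow, pow_succ]
      ring
    rw [heq]
    calc ‖p‖ ^ ij.1 * ‖q‖ ^ ij.2 * (‖p‖ * ‖q‖) * ‖x⁻¹‖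
        ≤ ‖p‖ ^ ij.1 * ‖q‖ ^ ij.2 * (‖p‖ * ‖q‖) * (1 - r)⁻¹ := by
          apply mul_le_mul_of_nonneg_left (hinvb x hx) (by positivity)
    _ = uN ij := by simp only [huN]; ring
  have hfDu : ∀ ij : ℕ × ℕ, ∀ x ∈ s, ‖fD ij x‖ ≤ uD ij := by
    intro ij x hx
    rcases eq_or_ne ij 0 with h | h
    · simp [hfD, huD, h]
    · simp only [hfD, huD, if_neg h, norm_neg, norm_mul, norm_pow]
      exact mul_le_mul_of_nonneg_left (hxub x hx) (by positivity)
  have huNle : ∀ ij : ℕ × ℕ, uN ij ≤ mN := by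
    intro ij
    have h1 : ‖p‖ ^ ij.1 * ‖q‖ ^ ij.2 ≤ 1 :=
      mul_le_one₀ (pow_le_one₀ (norm_nonneg p) hp.le)
        (pow_nonneg (norm_nonneg q) _) (pow_le_one₀ (norm_nonneg q) hq.le)
    calc uN ij ≤ 1 * (‖p‖ * ‖q‖ * (1 - r)⁻¹) := by
          simp only [huN]
          exact mul_le_mul_of_nonneg_right h1 (by positivity)
    _ = ‖p‖ * ‖q‖ * (1 - r)⁻¹ := one_mul _
    _ ≤ mN := by
          rw [hmNdef]
          exact mul_le_mul_of_nonneg_right hpqm (inv_nonneg.mpr h1r.le)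
  have huDle : ∀ ij : ℕ × ℕ, uD ij ≤ mD := by
    intro ij
    rcases eq_or_ne ij 0 with h | h
    · simp [huD, h]; exact hmD0
    · simp only [huD, if_neg h, hmDdef]
      exact mul_le_mul_of_nonneg_right (hkey ij h) (by linarith)
  have hfNcont : ∀ ij : ℕ × ℕ, ContinuousOn (fN ij) s := by
    intro ij
    apply ContinuousOn.neg
    exact continuousOn_const.mul (ContinuousOn.inv₀ continuousOn_id (fun x hx => hxne x hx))
  have hfDcont : ∀ ij : ℕ × ℕ, ContinuousOn (fD ij) s := by
    intro ij
    rcases eq_or_ne ij 0 with h | h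
    · simp only [hfD, h, if_pos rfl]; exact continuousOn_const
    · simp only [hfD, if_neg h]
      exact (continuousOn_const.mul continuousOn_id).neg
  obtain ⟨hNmul, hNcont, hNne⟩ := aux_main hUN hmN0 hmN1 hfNu huNle hfNcont
  obtain ⟨hDmul, hDcont, hDne⟩ := aux_main hUD hmD0 hmD1 hfDu huDle hfDcont
  -- the point families at 1
  set gPP : ℕ × ℕ → ℂ :=
    fun ij => if ij.1 = 0 ∨ ij.2 = 0 then 0 else -(p ^ ij.1 * q ^ ij.2) with hgPP
  set gP : ℕ × ℕ → ℂ := fun ij => if ij.2 = 0 ∧ ij.1 ≠ 0 then -(p ^ ij.1) else 0 with hgP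
  set gQ : ℕ × ℕ → ℂ := fun ij => if ij.1 = 0 ∧ ij.2 ≠ 0 then -(q ^ ij.2) else 0 with hgQ
  set u1 : ℕ × ℕ → ℝ := fun ij => if ij = 0 then 0 else ‖p‖ ^ ij.1 * ‖q‖ ^ ij.2 with hu1
  have hu1nn : ∀ ij : ℕ × ℕ, 0 ≤ u1 ij := by
    intro ij
    rcases eq_or_ne ij 0 with h | h <;> simp [hu1, h] <;> positivity
  have hU1 : Summable u1 := by
    apply Summable.of_nonneg_of_le hu1nn _ hgeo
    intro ij
    rcases eq_or_ne ij 0 with h | h <;> simp [hu1, h] <;> positivity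
  have hu1le : ∀ ij : ℕ × ℕ, u1 ij ≤ m0 := by
    intro ij
    rcases eq_or_ne ij 0 with h | h
    · simp [hu1, h]; exact hm00
    · simp only [hu1, if_neg h]; exact hkey ij h
  have h1mem : (1:ℂ) ∈ ({1} : Set ℂ) := rfl
  have hgPPu : ∀ ij : ℕ × ℕ, ∀ x ∈ ({1} : Set ℂ), ‖gPP ij‖ ≤ u1 ij := by
    intro ij x _
    rcases ij with ⟨i, j⟩
    by_cases hc : i = 0 ∨ j = 0
    · simp only [hgPP, if_pos hc, norm_zero]; exact hu1nn _
    · have hij : ((i, j) : ℕ × ℕ) ≠ 0 := by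
        simp only [ne_eq, Prod.ext_iff, Prod.fst_zero, Prod.snd_zero]
        intro h; exact hc (Or.inl h.1)
      simp [hgPP, hc, hu1, hij]
  have hgPu : ∀ ij : ℕ × ℕ, ∀ x ∈ ({1} : Set ℂ), ‖gP ij‖ ≤ u1 ij := by
    intro ij x _
    rcases ij with ⟨i, j⟩
    by_cases hc : j = 0 ∧ i ≠ 0
    · have hij : ((i, j) : ℕ × ℕ) ≠ 0 := by
        simp only [ne_eq, Prod.ext_iff, Prod.fst_zero, Prod.snd_zero]
        intro h; exact hc.2 h.1
      simp [hgP, hc, hu1, hij, hc.1]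
    · simp only [hgP, if_neg hc, norm_zero]; exact hu1nn _
  have hgQu : ∀ ij : ℕ × ℕ, ∀ x ∈ ({1} : Set ℂ), ‖gQ ij‖ ≤ u1 ij := by
    intro ij x _
    rcases ij with ⟨i, j⟩
    by_cases hc : i = 0 ∧ j ≠ 0
    · have hij : ((i, j) : ℕ × ℕ) ≠ 0 := by
        simp only [ne_eq, Prod.ext_iff, Prod.fst_zero, Prod.snd_zero]
        intro h; exact hc.2 h.2
      simp [hgQ, hc, hu1, hij, hc.1]
    · simp only [hgQ, if_neg hc, norm_zero]; exact hu1nn _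
  obtain ⟨hPPmul', _, hPPne'⟩ := aux_main (f := fun ij (_ : ℂ) => gPP ij) hU1 hm00 hm01
    hgPPu hu1le (fun ij => continuousOn_const)
  obtain ⟨hPmul', _, hPne'⟩ := aux_main (f := fun ij (_ : ℂ) => gP ij) hU1 hm00 hm01
    hgPu hu1le (fun ij => continuousOn_const)
  obtain ⟨hQmul', _, hQne'⟩ := aux_main (f := fun ij (_ : ℂ) => gQ ij) hU1 hm00 hm01
    hgQu hu1le (fun ij => continuousOn_const)
  have hPPmul := hPPmul' 1 h1mem
  have hPmul := hPmul' 1 h1mem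
  have hQmul := hQmul' 1 h1mem
  have hPPne := hPPne' 1 h1mem
  have hPne := hPne' 1 h1mem
  have hQne := hQne' 1 h1mem
  -- values of the three point products
  have hPPval : (∏' ij : ℕ × ℕ, (1 + gPP ij)) = ∏' ij : ℕ × ℕ, (1 + fN ij 1) := by
    have hginj : Function.Injective (fun ij : ℕ × ℕ => ((ij.1 + 1, ij.2 + 1) : ℕ × ℕ)) := by
      intro a b h
      simp only [Prod.ext_iff] at h ⊢
      omega
    have hsupp : Function.mulSupport (fun ij => 1 + gPP ij) ⊆
        Set.range (fun ij : ℕ × ℕ => ((ij.1 + 1, ij.2 + 1) : ℕ × ℕ)) := by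
      rintro ⟨i, j⟩ hij
      by_cases hc : i = 0 ∨ j = 0
      · exfalso; apply hij; simp [hgPP, hc]
      · push_neg at hc
        exact ⟨(i - 1, j - 1), by simp only [Prod.ext_iff]; constructor <;> omega⟩
    rw [← hginj.tprod_eq (f := fun ij => 1 + gPP ij) hsupp]
    apply tprod_congr
    rintro ⟨i, j⟩
    have : gPP (i + 1, j + 1) = -(p ^ (i + 1) * q ^ (j + 1)) := by
      simp [hgPP]
    simp only [this, hfN]
    simp
  have hPval : (∏' ij : ℕ × ℕ, (1 + gP ij)) = qPoch p p := by
    have hginj : Function.Injective (fun i : ℕ => ((i + 1, 0) : ℕ × ℕ)) := by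
      intro a b h
      simp only [Prod.ext_iff] at h
      omega
    have hsupp : Function.mulSupport (fun ij => 1 + gP ij) ⊆
        Set.range (fun i : ℕ => ((i + 1, 0) : ℕ × ℕ)) := by
      rintro ⟨i, j⟩ hij
      by_cases hc : j = 0 ∧ i ≠ 0
      · exact ⟨i - 1, by simp only [Prod.ext_iff]; constructor <;> omega⟩
      · exfalso; apply hij; simp [hgP, hc]
    rw [qPoch, ← hginj.tprod_eq (f := fun ij => 1 + gP ij) hsupp]
    apply tprod_congr
    intro k
    have : gP (k + 1, 0) = -(p ^ (k + 1)) := by simp [hgP]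
    rw [this, pow_succ]
    ring
  have hQval : (∏' ij : ℕ × ℕ, (1 + gQ ij)) = qPoch q q := by
    have hginj : Function.Injective (fun j : ℕ => ((0, j + 1) : ℕ × ℕ)) := by
      intro a b h
      simp only [Prod.ext_iff] at h
      omega
    have hsupp : Function.mulSupport (fun ij => 1 + gQ ij) ⊆
        Set.range (fun j : ℕ => ((0, j + 1) : ℕ × ℕ)) := by
      rintro ⟨i, j⟩ hij
      by_cases hc : i = 0 ∧ j ≠ 0
      · exact ⟨j - 1, by simp only [Prod.ext_iff]; constructor <;> omega⟩
      · exfalso; apply hij; simp [hgQ, hc]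
    rw [qPoch, ← hginj.tprod_eq (f := fun ij => 1 + gQ ij) hsupp]
    apply tprod_congr
    intro k
    have : gQ (0, k + 1) = -(q ^ (k + 1)) := by simp [hgQ]
    rw [this, pow_succ]
    ring
  -- decomposition of the denominator at 1
  have hdecomp : ∀ ij : ℕ × ℕ,
      (1 + fD ij 1) = (1 + gPP ij) * ((1 + gP ij) * (1 + gQ ij)) := by
    rintro ⟨i, j⟩
    rcases Nat.eq_zero_or_pos i with hi | hi <;> rcases Nat.eq_zero_or_pos j with hj | hj
    · subst hi; subst hj
      simp [hfD, hgPP, hgP, hgQ, Prod.ext_iff]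
    · subst hi
      have hj' : j ≠ 0 := by omega
      have hij : ((0, j) : ℕ × ℕ) ≠ 0 := by
        simp only [ne_eq, Prod.ext_iff, Prod.fst_zero, Prod.snd_zero]
        intro h; exact hj' h.2
      simp [hfD, hgPP, hgP, hgQ, hij, hj']
    · subst hj
      have hi' : i ≠ 0 := by omega
      have hij : ((i, 0) : ℕ × ℕ) ≠ 0 := by simp [Prod.mk_eq_zero, hi']
      simp [hfD, hgPP, hgP, hgQ, hij, hi']
    · have hi' : i ≠ 0 := by omega
      have hj' : j ≠ 0 := by omega
      have hij : ((i, j) : ℕ × ℕ) ≠ 0 := by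
        simp only [ne_eq, Prod.ext_iff, Prod.fst_zero, Prod.snd_zero]
        intro h; exact hi' h.1
      simp [hfD, hgPP, hgP, hgQ, hij, hi', hj']
  have hD1 : (∏' ij : ℕ × ℕ, (1 + fD ij 1))
      = (∏' ij : ℕ × ℕ, (1 + fN ij 1)) * (qPoch p p * qPoch q q) := by
    have h1 : (∏' ij : ℕ × ℕ, (1 + fD ij 1))
        = ∏' ij : ℕ × ℕ, ((1 + gPP ij) * ((1 + gP ij) * (1 + gQ ij))) :=
      tprod_congr hdecomp
    rw [h1, Multipliable.tprod_mul hPPmul (hPmul.mul hQmul), Multipliable.tprod_mul hPmul hQmul,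
      hPPval, hPval, hQval]
  -- the identity on the punctured ball
  have hid : ∀ x ∈ s, x ≠ 1 → (1 - x) * ellGamma p q x
      = (∏' ij : ℕ × ℕ, (1 + fN ij x)) / (∏' ij : ℕ × ℕ, (1 + fD ij x)) := by
    intro x hx hx1
    have h1x : (1 : ℂ) - x ≠ 0 := sub_ne_zero.mpr (fun h => hx1 h.symm)
    have hDx := hDne x hx
    have hDfull : HasProd (fun ij : ℕ × ℕ =>
        (if ij = 0 then 1 - x else 1) * (1 + fD ij x))
        ((1 - x) * ∏' ij : ℕ × ℕ, (1 + fD ij x)) :=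
      (hasProd_ite_eq (0 : ℕ × ℕ) (1 - x)).mul (hDmul x hx).hasProd
    have hfull_ne : (1 - x) * (∏' ij : ℕ × ℕ, (1 + fD ij x)) ≠ 0 := mul_ne_zero h1x hDx
    have hinvprod : HasProd (fun ij : ℕ × ℕ =>
        ((if ij = 0 then 1 - x else 1) * (1 + fD ij x))⁻¹)
        (((1 - x) * ∏' ij : ℕ × ℕ, (1 + fD ij x))⁻¹) :=
      hasProd_inv₀ hDfull hfull_ne
    have hGam : ellGamma p q x = ∏' ij : ℕ × ℕ,
        ((1 + fN ij x) * ((if ij = 0 then 1 - x else 1) * (1 + fD ij x))⁻¹) := by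
      rw [ellGamma]
      apply tprod_congr
      rintro ⟨i, j⟩
      rcases eq_or_ne ((i, j) : ℕ × ℕ) 0 with h0 | h0
      · obtain ⟨hi, hj⟩ : i = 0 ∧ j = 0 := by
          simpa [Prod.ext_iff] using h0
        subst hi; subst hj
        simp only [hfN, hfD, if_pos h0, div_eq_mul_inv, pow_zero, one_mul, mul_one,
          add_zero, pow_one]
        ring
      · simp only [hfN, hfD, if_neg h0, div_eq_mul_inv, one_mul]
        ring
    have hGam2 : ellGamma p q x = (∏' ij : ℕ × ℕ, (1 + fN ij x)) *
        ((1 - x) * ∏' ij : ℕ × ℕ, (1 + fD ij x))⁻¹ := by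
      rw [hGam, Multipliable.tprod_mul (hNmul x hx) hinvprod.multipliable, hinvprod.tprod_eq]
    rw [hGam2, div_eq_mul_inv, mul_inv]
    field_simp
  -- take the limit
  have hNC : ContinuousAt (fun x => ∏' ij : ℕ × ℕ, (1 + fN ij x)) 1 :=
    hNcont.continuousAt (Metric.isOpen_ball.mem_nhds h1s)
  have hDC : ContinuousAt (fun x => ∏' ij : ℕ × ℕ, (1 + fD ij x)) 1 :=
    hDcont.continuousAt (Metric.isOpen_ball.mem_nhds h1s)
  have htend : Tendsto (fun x => (∏' ij : ℕ × ℕ, (1 + fN ij x))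
      / (∏' ij : ℕ × ℕ, (1 + fD ij x))) (𝓝 1)
      (𝓝 ((∏' ij : ℕ × ℕ, (1 + fN ij 1)) / (∏' ij : ℕ × ℕ, (1 + fD ij 1)))) :=
    hNC.div hDC (hDne 1 h1s)
  have hqpne : qPoch p p ≠ 0 := hPval ▸ hPne
  have hqqne : qPoch q q ≠ 0 := hQval ▸ hQne
  have hNval : (∏' ij : ℕ × ℕ, (1 + fN ij 1)) ≠ 0 := hNne 1 h1s
  have hval : (∏' ij : ℕ × ℕ, (1 + fN ij 1)) / (∏' ij : ℕ × ℕ, (1 + fD ij 1))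
      = 1 / (qPoch p p * qPoch q q) := by
    rw [hD1]
    rw [div_eq_div_iff (by exact mul_ne_zero hNval (mul_ne_zero hqpne hqqne))
      (mul_ne_zero hqpne hqqne)]
    ring
  rw [← hval]
  refine Tendsto.congr' ?_ (htend.mono_left nhdsWithin_le_nhds)
  have hmem : s ∈ 𝓝[≠] (1:ℂ) :=
    nhdsWithin_le_nhds (Metric.isOpen_ball.mem_nhds h1s)
  filter_upwards [hmem, self_mem_nhdsWithin] with x hxs hx1
  exact (hid x hxs (by simpa using hx1)).symm
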